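/- arXiv:2209.02041 — 2 statements merged into one kernel-verified Lean document; each statement's English description precedes it below -/
import Mathlib

section
/- Let (X,r) be a solution, k a positive integer, and x ∈ X. Suppose x lies in a 𝒢(X,r)-orbit of size m and in a 𝒢(X,r^{(k)})-orbit of size m'. Then m' is a multiple of the maximal divisor m_k of m which is coprime to k (i.e. the largest d with d | m and gcd(d,k) = 1 divides m'). -/
open Function

variable {X : Type*}

/-- The map `r(x,y) = (σ_x(y), τ_y(x))` built from two families of bijections. -/
def ybR (σ τ : X → Equiv.Perm X) : X × X → X × X :=
  fun p => (σ p.1 p.2, τ p.2 p.1)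

/-- Apply a map `X × X → X × X` to the first two coordinates of a triple (`r × id`). -/
def lmap (r : X × X → X × X) : X × X × X → X × X × X :=
  fun p => ((r (p.1, p.2.1)).1, ((r (p.1, p.2.1)).2, p.2.2))

/-- Apply a map `X × X → X × X` to the last two coordinates of a triple (`id × r`). -/
def rmap (r : X × X → X × X) : X × X × X → X × X × X :=
  fun p => (p.1, r p.2)

/-- A finite non-degenerate involutive set-theoretic solution of the Yang--Baxter
equation on a finite set `X` with `|X| > 1`. -/
structure YBSolution (X : Type*) [Fintype X] where
  σ : X → Equiv.Perm X
  τ : X → Equiv.Perm X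
  card_gt_one : 1 < Fintype.card X
  involutive : ∀ p : X × X, ybR σ τ (ybR σ τ p) = p
  braid : lmap (ybR σ τ) ∘ rmap (ybR σ τ) ∘ lmap (ybR σ τ)
        = rmap (ybR σ τ) ∘ lmap (ybR σ τ) ∘ rmap (ybR σ τ)

namespace YBSolution

variable [Fintype X]

/-- The diagonal map `T(x) = τ_x⁻¹(x)`. -/
def T (S : YBSolution X) (x : X) : X := (S.τ x).symm x

/-- The map `U(x) = σ_x⁻¹(x)`, the inverse of the diagonal map. -/
def U (S : YBSolution X) (x : X) : X := (S.σ x).symm x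

/-- The `k`-cabled sigma maps (also denoted `π_k`):
`σ^{(k)}_x = σ_x ∘ σ_{U(x)} ∘ ⋯ ∘ σ_{U^{k-1}(x)}`. -/
def sigmaCab (S : YBSolution X) : ℕ → X → X → X
  | 0, _ => id
  | k + 1, x => ⇑(S.σ x) ∘ S.sigmaCab k (S.U x)

/-- The composition `τ_{U^{k-1}(y)} ∘ ⋯ ∘ τ_{U(y)} ∘ τ_y`. -/
def tauChain (S : YBSolution X) : ℕ → X → X → X
  | 0, _ => id
  | k + 1, y => S.tauChain k (S.U y) ∘ ⇑(S.τ y)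

/-- The `k`-cabled tau maps:
`τ^{(k)}_y = T^{k-1} ∘ τ_{U^{k-1}(y)} ∘ ⋯ ∘ τ_{U(y)} ∘ τ_y ∘ T^{-(k-1)}`,
where `T^{-(k-1)} = U^{k-1}` since `U` is the inverse of `T`. -/
def tauCab (S : YBSolution X) (k : ℕ) (y : X) : X → X :=
  S.T^[k - 1] ∘ S.tauChain k y ∘ S.U^[k - 1]

/-- The `k`-cabled solution `r^{(k)}(x,y) = (σ^{(k)}_x(y), τ^{(k)}_y(x))`. -/
def rCab (S : YBSolution X) (k : ℕ) : X × X → X × X :=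
  fun p => (S.sigmaCab k p.1 p.2, S.tauCab k p.2 p.1)

/-- The permutation group `𝒢(X,r)`, generated by the `σ_x`. -/
def G (S : YBSolution X) : Subgroup (Equiv.Perm X) :=
  Subgroup.closure (Set.range S.σ)

/-- The permutation group `𝒢(X,r^{(k)})` of the `k`-cabled solution,
generated by the `σ^{(k)}_x`. -/
def Gcab (S : YBSolution X) (k : ℕ) : Subgroup (Equiv.Perm X) :=
  Subgroup.closure {g : Equiv.Perm X | ∃ x : X, ⇑g = S.sigmaCab k x}

/-- The orbit of `x` under the diagonal map `T`. -/
def Torbit (S : YBSolution X) (x : X) : Set X := {y | ∃ n : ℕ, S.T^[n] x = y}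

/-- The orbit of `x` under `𝒢(X,r)`. -/
def Gorbit (S : YBSolution X) (x : X) : Set X := {y | ∃ g ∈ S.G, g x = y}

/-- The orbit of `x` under `𝒢(X,r^{(k)})`. -/
def GcabOrbit (S : YBSolution X) (k : ℕ) (x : X) : Set X :=
  {y | ∃ g ∈ S.Gcab k, g x = y}

/-- A solution is indecomposable when `𝒢(X,r)` acts transitively on `X`. -/
def IsIndecomposable (S : YBSolution X) : Prop := ∀ x y : X, ∃ g ∈ S.G, g x = y

end YBSolution

section Basic
variable [Fintype X] (S : YBSolution X)

namespace YBSolution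

lemma inv1 (x y : X) : S.σ (S.σ x y) (S.τ y x) = x := by
  have h := S.involutive (x, y)
  have := congrArg Prod.fst h
  simpa [ybR] using this

lemma inv2 (x y : X) : S.τ (S.τ y x) (S.σ x y) = y := by
  have h := S.involutive (x, y)
  have := congrArg Prod.snd h
  simpa [ybR] using this

lemma braid1 (x z u : X) : S.σ (S.σ x z) (S.σ (S.τ z x) u) = S.σ x (S.σ z u) := by
  have h := congrFun S.braid (x, z, u)
  have := congrArg Prod.fst h
  simpa [lmap, rmap, ybR] using this

/-- the permutation identity extracted from the braid relation -/
lemma sigma_sigma (x z : X) : S.σ (S.σ x z) * S.σ (S.τ z x) = S.σ x * S.σ z := by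
  ext u
  simpa using S.braid1 x z u

lemma sigma_U (x : X) : S.σ x (S.U x) = x := by simp [U]

lemma tau_U (x : X) : S.τ (S.U x) x = S.U x := by
  have h := S.inv1 x (S.U x)
  rw [S.sigma_U x] at h
  have : S.σ x (S.τ (S.U x) x) = S.σ x (S.U x) := by rw [h, S.sigma_U]
  exact (S.σ x).injective this

lemma T_U (x : X) : S.T (S.U x) = x := by
  have h := S.tau_U x
  simp only [T]
  exact (Equiv.symm_apply_eq _).2 h.symm

lemma U_bij : Function.Bijective S.U := by
  have hinj : Function.Injective S.U := fun a b hab => by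
    have := congrArg S.T hab
    rwa [S.T_U, S.T_U] at this
  exact (Finite.injective_iff_bijective).1 hinj

lemma U_T (x : X) : S.U (S.T x) = x := by
  obtain ⟨y, rfl⟩ := S.U_bij.2 x
  rw [S.T_U]

lemma U_iter_T_iter (j : ℕ) (x : X) : S.U^[j] (S.T^[j] x) = x := by
  induction j generalizing x with
  | zero => rfl
  | succ n ih =>
    rw [Function.iterate_succ_apply, Function.iterate_succ_apply', S.U_T, ih]

/-- cabled sigma as a permutation -/
def sigmaCabPerm (S : YBSolution X) : ℕ → X → Equiv.Perm X
  | 0, _ => 1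
  | k + 1, x => S.σ x * S.sigmaCabPerm k (S.U x)

@[simp] lemma sigmaCabPerm_coe (k : ℕ) (x : X) :
    ⇑(S.sigmaCabPerm k x) = S.sigmaCab k x := by
  induction k generalizing x with
  | zero => rfl
  | succ n ih =>
    funext y
    simp [sigmaCabPerm, sigmaCab, ih]

lemma sigmaCab_U_iter (j : ℕ) (x : X) : S.sigmaCab j x (S.U^[j] x) = x := by
  induction j generalizing x with
  | zero => rfl
  | succ n ih =>
    rw [Function.iterate_succ_apply]
    simp only [sigmaCab, Function.comp_apply, ih (S.U x), S.sigma_U]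

end YBSolution
end Basic
section Cocycle
open Multiplicative SemidirectProduct

variable {X : Type*} [Fintype X]

/-- permutation action on integer vectors -/
noncomputable def permAddAut (g : Equiv.Perm X) : (X → ℤ) ≃+ (X → ℤ) where
  toFun v := v ∘ ⇑g.symm
  invFun v := v ∘ ⇑g
  left_inv v := by funext z; simp
  right_inv v := by funext z; simp
  map_add' v w := rfl

noncomputable def phiHom : Equiv.Perm X →* MulAut (Multiplicative (X → ℤ)) where
  toFun g := AddEquiv.toMultiplicative (permAddAut g)
  map_one' := by ext v; rfl
  map_mul' g h := by
    ext v : 1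
    show (Multiplicative.toAdd v) ∘ ⇑(g * h).symm = ((Multiplicative.toAdd v) ∘ ⇑h.symm) ∘ ⇑g.symm
    funext z
    simp [Function.comp, ← Equiv.Perm.inv_def, mul_inv_rev, Equiv.Perm.mul_apply]

/-- the ambient group `ℤ^X ⋊ Perm X` -/
noncomputable abbrev Wgrp (X : Type*) [Fintype X] :=
  SemidirectProduct (Multiplicative (X → ℤ)) (Equiv.Perm X) phiHom

namespace Wgrp

/-- translation part -/
noncomputable def t (h : Wgrp X) : X → ℤ := Multiplicative.toAdd h.left

/-- permutation part, as a group hom -/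
noncomputable def θ : Wgrp X →* Equiv.Perm X := SemidirectProduct.rightHom

noncomputable def act (g : Equiv.Perm X) (v : X → ℤ) : X → ℤ := v ∘ ⇑g.symm

@[simp] lemma act_apply (g : Equiv.Perm X) (v : X → ℤ) (z : X) :
    act g v z = v (g.symm z) := rfl

@[simp] lemma act_one (v : X → ℤ) : act (1 : Equiv.Perm X) v = v := rfl

lemma act_mul (g h : Equiv.Perm X) (v : X → ℤ) : act (g * h) v = act g (act h v) := by
  funext z; simp [Equiv.Perm.mul_def, Equiv.symm_trans_apply]

@[simp] lemma act_add (g : Equiv.Perm X) (v w : X → ℤ) :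
    act g (v + w) = act g v + act g w := rfl

@[simp] lemma act_neg (g : Equiv.Perm X) (v : X → ℤ) : act g (-v) = -(act g v) := rfl

@[simp] lemma act_zero (g : Equiv.Perm X) : act g (0 : X → ℤ) = 0 := rfl

@[simp] lemma act_smul (g : Equiv.Perm X) (c : ℤ) (v : X → ℤ) :
    act g (c • v) = c • act g v := rfl

lemma t_mul (a b : Wgrp X) : t (a * b) = t a + act (θ a) (t b) := rfl

@[simp] lemma t_one : t (1 : Wgrp X) = 0 := rfl

lemma t_inv (a : Wgrp X) : t a⁻¹ = - act (θ a)⁻¹ (t a) := rfl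

lemma act_inv_apply (g : Equiv.Perm X) (v : X → ℤ) (z : X) : act g⁻¹ v z = v (g z) := rfl

end Wgrp
end Cocycle
section MonoidPart
open Wgrp
open scoped Classical

variable {X : Type*} [Fintype X] (S : YBSolution X)

/-- basis vector -/
noncomputable def ev (x : X) : X → ℤ := fun z => if z = x then 1 else 0

@[simp] lemma ev_self (x : X) : ev x x = 1 := by simp [ev]

lemma ev_nonneg (x z : X) : 0 ≤ ev x z := by
  simp only [ev]; split <;> norm_num

lemma act_ev (g : Equiv.Perm X) (x : X) : act g (ev x) = ev (g x) := by
  funext z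
  simp only [act_apply, ev]
  congr 1
  rw [eq_iff_iff]
  constructor
  · rintro rfl; simp
  · rintro rfl; simp

lemma sum_ev (x : X) : ∑ z, ev x z = 1 := by
  simp [ev]

lemma act_const (g : Equiv.Perm X) (c : ℤ) : act g (fun _ => c) = fun _ => c := rfl

lemma sum_act (g : Equiv.Perm X) (v : X → ℤ) : ∑ z, act g v z = ∑ z, v z := by
  simp only [act_apply]
  exact Equiv.sum_comp g.symm v

lemma act_nonneg (g : Equiv.Perm X) {v : X → ℤ} (hv : ∀ z, 0 ≤ v z) (z : X) :
    0 ≤ act g v z := hv _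

/-- generator of the structure group inside `ℤ^X ⋊ Perm X` -/
noncomputable def wgen (x : X) : Wgrp X := ⟨Multiplicative.ofAdd (ev x), S.σ x⟩

@[simp] lemma t_wgen (x : X) : t (wgen S x) = ev x := rfl
@[simp] lemma θ_wgen (x : X) : θ (wgen S x) = S.σ x := rfl

/-- cabled generator -/
noncomputable def wcab (k : ℕ) (x : X) : Wgrp X :=
  ⟨Multiplicative.ofAdd ((k : ℤ) • ev x), S.sigmaCabPerm k x⟩

@[simp] lemma t_wcab (k : ℕ) (x : X) : t (wcab S k x) = (k : ℤ) • ev x := rfl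
@[simp] lemma θ_wcab (k : ℕ) (x : X) : θ (wcab S k x) = S.sigmaCabPerm k x := rfl

lemma wcab_zero (x : X) : wcab S 0 x = 1 := by
  apply SemidirectProduct.ext
  · show Multiplicative.ofAdd ((0 : ℤ) • ev x) = 1
    simp
  · rfl

lemma wcab_succ (k : ℕ) (x : X) :
    wcab S (k + 1) x = wgen S x * wcab S k (S.U x) := by
  apply SemidirectProduct.ext
  · show Multiplicative.ofAdd _ = _
    have : t (wgen S x * wcab S k (S.U x)) = ev x + act (S.σ x) ((k : ℤ) • ev (S.U x)) := rfl
    have h2 : ev x + act (S.σ x) ((k : ℤ) • ev (S.U x)) = ((k : ℤ) + 1) • ev x := by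
      rw [act_smul, act_ev, S.sigma_U, add_smul, one_smul, add_comm]
    show Multiplicative.ofAdd (((k : ℕ) + 1 : ℤ) • ev x) = (wgen S x * wcab S k (S.U x)).left
    have h3 : (wgen S x * wcab S k (S.U x)).left
        = Multiplicative.ofAdd (ev x + act (S.σ x) ((k : ℤ) • ev (S.U x))) := rfl
    rw [h3, h2]
    try push_cast
    try norm_num
  · show S.sigmaCabPerm (k+1) x = S.σ x * S.sigmaCabPerm k (S.U x)
    rfl

/-- the structure group, realized inside `ℤ^X ⋊ Perm X` -/
noncomputable def Hgrp : Subgroup (Wgrp X) := Subgroup.closure (Set.range (wgen S))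

/-- the cabled structure group -/
noncomputable def Hcab (k : ℕ) : Subgroup (Wgrp X) := Subgroup.closure (Set.range (wcab S k))

lemma wcab_mem_Hgrp (k : ℕ) (x : X) : wcab S k x ∈ Hgrp S := by
  induction k generalizing x with
  | zero => rw [wcab_zero]; exact one_mem _
  | succ n ih =>
    rw [wcab_succ]
    exact mul_mem (Subgroup.subset_closure ⟨x, rfl⟩) (ih _)

lemma Hcab_le (k : ℕ) : Hcab S k ≤ Hgrp S := by
  rw [Hcab, Subgroup.closure_le]
  rintro _ ⟨x, rfl⟩
  exact wcab_mem_Hgrp S k x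

lemma θ_map_Hgrp : (Hgrp S).map (θ) = S.G := by
  rw [Hgrp, MonoidHom.map_closure, YBSolution.G]
  congr 1
  rw [← Set.range_comp]
  rfl

lemma θ_map_Hcab (k : ℕ) : (Hcab S k).map (θ) = S.Gcab k := by
  rw [Hcab, MonoidHom.map_closure, YBSolution.Gcab]
  congr 1
  rw [← Set.range_comp]
  ext g
  constructor
  · rintro ⟨x, rfl⟩
    exact ⟨x, by simp⟩
  · rintro ⟨x, hx⟩
    refine ⟨x, ?_⟩
    have : ⇑g = ⇑(S.sigmaCabPerm k x) := by rw [hx]; simp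
    exact (Equiv.coe_fn_injective this).symm

/-- product of a list of generators -/
noncomputable def wprod (l : List X) : Wgrp X := (l.map (wgen S)).prod

@[simp] lemma wprod_nil : wprod S ([] : List X) = 1 := rfl

@[simp] lemma wprod_cons (x : X) (l : List X) :
    wprod S (x :: l) = wgen S x * wprod S l := by simp [wprod]

lemma wprod_append (l₁ l₂ : List X) :
    wprod S (l₁ ++ l₂) = wprod S l₁ * wprod S l₂ := by simp [wprod]

lemma wprod_mem (l : List X) : wprod S l ∈ Hgrp S := by
  induction l with
  | nil => exact one_mem _
  | cons x l ih => rw [wprod_cons]; exact mul_mem (Subgroup.subset_closure ⟨x, rfl⟩) ih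

lemma t_wprod_nonneg (l : List X) (z : X) : 0 ≤ t (wprod S l) z := by
  induction l generalizing z with
  | nil => simp
  | cons x r ih =>
    rw [wprod_cons, t_mul]
    exact add_nonneg (ev_nonneg x z) (act_nonneg _ (fun u => ih u) z)

lemma sum_t_wprod (l : List X) : ∑ z, t (wprod S l) z = l.length := by
  induction l with
  | nil => simp
  | cons x r ih =>
    rw [wprod_cons, t_mul]
    simp only [t_wgen, θ_wgen, Pi.add_apply, Finset.sum_add_distrib]
    rw [sum_ev, sum_act, ih]
    simp [add_comm]

/-- the quadratic exchange relation, inside `W` -/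
lemma exchange (x z : X) :
    wgen S x * wgen S z = wgen S (S.σ x z) * wgen S (S.τ z x) := by
  apply SemidirectProduct.ext
  · show Multiplicative.ofAdd (ev x + act (S.σ x) (ev z))
      = Multiplicative.ofAdd (ev (S.σ x z) + act (S.σ (S.σ x z)) (ev (S.τ z x)))
    rw [act_ev, act_ev, S.inv1, add_comm]
  · exact (S.sigma_sigma x z).symm

/-- left-divisibility by any letter occurring in the `t`-vector -/
lemma lemC : ∀ (n : ℕ) (l : List X), l.length = n → ∀ y : X, 1 ≤ t (wprod S l) y →
    ∃ l' : List X, l'.length + 1 = n ∧ wprod S l = wgen S y * wprod S l' := by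
  intro n
  induction n with
  | zero =>
    intro l hl y hy
    rw [List.length_eq_zero_iff] at hl
    subst hl
    simp at hy
  | succ n ih =>
    intro l hl y hy
    obtain ⟨x, r, rfl⟩ : ∃ x r, l = x :: r := by
      cases l with
      | nil => simp at hl
      | cons a b => exact ⟨a, b, rfl⟩
    simp only [List.length_cons, Nat.add_right_cancel_iff] at hl
    by_cases hxy : x = y
    · subst hxy
      exact ⟨r, by omega, rfl⟩
    · rw [wprod_cons, t_mul] at hy
      have hev : ev x y = 0 := by simp [ev, Ne.symm hxy]
      rw [t_wgen, θ_wgen, Pi.add_apply, hev, zero_add, act_apply] at hy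
      obtain ⟨l'', hl'', hw⟩ := ih r hl ((S.σ x).symm y) hy
      refine ⟨S.τ ((S.σ x).symm y) x :: l'', by simpa using hl'', ?_⟩
      rw [wprod_cons, hw, ← mul_assoc, exchange S x ((S.σ x).symm y), Equiv.apply_symm_apply,
        wprod_cons, mul_assoc]

/-- `t` is injective on positive words -/
lemma claimB : ∀ (n : ℕ) (l₁ l₂ : List X), l₁.length = n → l₂.length = n →
    t (wprod S l₁) = t (wprod S l₂) → wprod S l₁ = wprod S l₂ := by
  intro n
  induction n with
  | zero =>
    intro l₁ l₂ h₁ h₂ _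
    rw [List.length_eq_zero_iff] at h₁ h₂
    subst h₁; subst h₂; rfl
  | succ n ih =>
    intro l₁ l₂ h₁ h₂ ht
    obtain ⟨x, r, rfl⟩ : ∃ x r, l₁ = x :: r := by
      cases l₁ with
      | nil => simp at h₁
      | cons a b => exact ⟨a, b, rfl⟩
    simp only [List.length_cons, Nat.add_right_cancel_iff] at h₁
    have hx : 1 ≤ t (wprod S l₂) x := by
      rw [← ht, wprod_cons, t_mul, t_wgen, θ_wgen, Pi.add_apply, ev_self]
      have := act_nonneg (S.σ x) (fun u => t_wprod_nonneg S r u) x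
      omega
    obtain ⟨l₂', hl₂', hw₂⟩ := lemC S (n+1) l₂ h₂ x hx
    rw [hw₂]
    rw [wprod_cons]
    congr 1
    apply ih r l₂' h₁ (by omega)
    have : t (wgen S x * wprod S r) = t (wgen S x * wprod S l₂') := by
      rw [← wprod_cons, ht, hw₂]
    rw [t_mul, t_mul, t_wgen, θ_wgen] at this
    have h3 : act (S.σ x) (t (wprod S r)) = act (S.σ x) (t (wprod S l₂')) :=
      add_left_cancel this
    have h4 := congrArg (act (S.σ x)⁻¹) h3
    rwa [← act_mul, ← act_mul, inv_mul_cancel, act_one, act_one] at h4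

end MonoidPart
section InjSurj
open Wgrp
open scoped Classical

variable {X : Type*} [Fintype X] (S : YBSolution X)

/-- pushing one inverse generator through a positive word -/
lemma lemE : ∀ (p : List X) (x : X), ∃ p' q' : List X,
    (wgen S x)⁻¹ * wprod S p = wprod S p' * (wprod S q')⁻¹ := by
  intro p
  induction p with
  | nil =>
    intro x
    exact ⟨[], [x], by simp⟩
  | cons u p₁ ih =>
    intro x
    have hex : (wgen S x)⁻¹ * wgen S u
        = wgen S ((S.σ x).symm u) * (wgen S (S.τ ((S.σ x).symm u) x))⁻¹ := by
      have h := exchange S x ((S.σ x).symm u)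
      rw [Equiv.apply_symm_apply] at h
      have h2 : wgen S u = wgen S x * wgen S ((S.σ x).symm u)
          * (wgen S (S.τ ((S.σ x).symm u) x))⁻¹ := by rw [h]; group
      rw [h2]; group
    obtain ⟨p₂, q₂, h₂⟩ := ih (S.τ ((S.σ x).symm u) x)
    refine ⟨(S.σ x).symm u :: p₂, q₂, ?_⟩
    calc (wgen S x)⁻¹ * wprod S (u :: p₁)
        = ((wgen S x)⁻¹ * wgen S u) * wprod S p₁ := by rw [wprod_cons]; group
      _ = wgen S ((S.σ x).symm u) *
            ((wgen S (S.τ ((S.σ x).symm u) x))⁻¹ * wprod S p₁) := by rw [hex]; group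
      _ = wgen S ((S.σ x).symm u) * (wprod S p₂ * (wprod S q₂)⁻¹) := by rw [h₂]
      _ = wprod S ((S.σ x).symm u :: p₂) * (wprod S q₂)⁻¹ := by rw [wprod_cons]; group

/-- pushing a positive word through an inverse positive word -/
lemma lemD : ∀ (q p : List X), ∃ p' q' : List X,
    (wprod S q)⁻¹ * wprod S p = wprod S p' * (wprod S q')⁻¹ := by
  intro q
  induction q with
  | nil => intro p; exact ⟨p, [], by simp⟩
  | cons x q₁ ih =>
    intro p
    obtain ⟨p₁, q₁', h₁⟩ := lemE S p x
    obtain ⟨p₂, q₂, h₂⟩ := ih p₁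
    refine ⟨p₂, q₁' ++ q₂, ?_⟩
    calc (wprod S (x :: q₁))⁻¹ * wprod S p
        = (wprod S q₁)⁻¹ * ((wgen S x)⁻¹ * wprod S p) := by rw [wprod_cons]; group
      _ = (wprod S q₁)⁻¹ * (wprod S p₁ * (wprod S q₁')⁻¹) := by rw [h₁]
      _ = ((wprod S q₁)⁻¹ * wprod S p₁) * (wprod S q₁')⁻¹ := by group
      _ = (wprod S p₂ * (wprod S q₂)⁻¹) * (wprod S q₁')⁻¹ := by rw [h₂]
      _ = wprod S p₂ * (wprod S q₁' * wprod S q₂)⁻¹ := by group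
      _ = wprod S p₂ * (wprod S (q₁' ++ q₂))⁻¹ := by rw [wprod_append]

/-- every element of the structure group is a positive word times an inverse positive word -/
lemma rep_pq (h : Wgrp X) (hh : h ∈ Hgrp S) :
    ∃ p q : List X, h = wprod S p * (wprod S q)⁻¹ := by
  induction hh using Subgroup.closure_induction with
  | mem g hg =>
    obtain ⟨x, rfl⟩ := hg
    exact ⟨[x], [], by simp⟩
  | one => exact ⟨[], [], by simp⟩
  | mul a b _ _ iha ihb =>
    obtain ⟨p₁, q₁, rfl⟩ := iha
    obtain ⟨p₂, q₂, rfl⟩ := ihb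
    obtain ⟨p₃, q₃, h₃⟩ := lemD S q₁ p₂
    refine ⟨p₁ ++ p₃, q₂ ++ q₃, ?_⟩
    rw [wprod_append, wprod_append, mul_inv_rev]
    calc wprod S p₁ * (wprod S q₁)⁻¹ * (wprod S p₂ * (wprod S q₂)⁻¹)
        = wprod S p₁ * ((wprod S q₁)⁻¹ * wprod S p₂) * (wprod S q₂)⁻¹ := by group
      _ = wprod S p₁ * (wprod S p₃ * (wprod S q₃)⁻¹) * (wprod S q₂)⁻¹ := by rw [h₃]
      _ = wprod S p₁ * wprod S p₃ * ((wprod S q₃)⁻¹ * (wprod S q₂)⁻¹) := by group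
  | inv a _ iha =>
    obtain ⟨p₁, q₁, rfl⟩ := iha
    exact ⟨q₁, p₁, by group⟩

/-- positive surjectivity: every nonnegative vector is `t` of a positive word -/
lemma surjP : ∀ (n : ℕ) (v : X → ℤ), (∀ z, 0 ≤ v z) → (∑ z, (v z).toNat) = n →
    ∃ l : List X, t (wprod S l) = v := by
  intro n
  induction n with
  | zero =>
    intro v hv hs
    refine ⟨[], ?_⟩
    have : ∀ z, v z = 0 := by
      intro z
      have h1 : (v z).toNat = 0 := by
        by_contra h
        have : 0 < ∑ z, (v z).toNat := by
          refine Finset.sum_pos' (fun i _ => Nat.zero_le _) ⟨z, Finset.mem_univ z, by omega⟩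
        omega
      have := hv z
      omega
    simp only [wprod_nil, t_one]
    funext z
    exact (this z).symm
  | succ n ih =>
    intro v hv hs
    have hex : ∃ y, 0 < v y := by
      by_contra h
      push_neg at h
      have : ∀ z, (v z).toNat = 0 := fun z => by have := hv z; have := h z; omega
      rw [Finset.sum_congr rfl (fun z _ => this z)] at hs
      simp at hs
    obtain ⟨y, hy⟩ := hex
    have hsub : ∀ u, 0 ≤ (v - ev y) u := by
      intro u
      rcases eq_or_ne u y with rfl | hne
      · simp only [Pi.sub_apply, ev_self]; omega
      · have hz : ev y u = 0 := by simp [ev, hne]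
        simp only [Pi.sub_apply, hz]
        have := hv u; omega
    have hvnn : ∀ z, 0 ≤ act (S.σ y)⁻¹ (v - ev y) z := fun z => act_nonneg _ hsub z
    have hsum : (∑ z, ((act (S.σ y)⁻¹ (v - ev y)) z).toNat) = n := by
      have h1 : ∑ z, (act (S.σ y)⁻¹ (v - ev y)) z = ∑ z, (v z - ev y z) := by
        rw [sum_act]; rfl
      have h2 : ∑ z, (v z - ev y z) = (∑ z, v z) - 1 := by
        rw [Finset.sum_sub_distrib, sum_ev]
      have h3 : ((∑ z, ((act (S.σ y)⁻¹ (v - ev y)) z).toNat : ℕ) : ℤ)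
          = ∑ z, (act (S.σ y)⁻¹ (v - ev y)) z := by
        rw [Nat.cast_sum]
        exact Finset.sum_congr rfl (fun z _ => Int.toNat_of_nonneg (hvnn z))
      have h4 : ((∑ z, (v z).toNat : ℕ) : ℤ) = ∑ z, (v z) := by
        rw [Nat.cast_sum]
        exact Finset.sum_congr rfl (fun z _ => Int.toNat_of_nonneg (hv z))
      have h5 : ((n : ℤ) + 1) = ∑ z, v z := by rw [← h4, hs]; push_cast; ring
      omega
    obtain ⟨l', hl'⟩ := ih _ hvnn hsum
    refine ⟨y :: l', ?_⟩
    rw [wprod_cons, t_mul, t_wgen, θ_wgen, hl', ← act_mul, mul_inv_cancel, act_one]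
    funext z
    simp only [Pi.add_apply, Pi.sub_apply]
    ring

/-- THE injectivity theorem: an element of the structure group with zero translation
part is trivial -/
theorem t_eq_zero_imp_one (h : Wgrp X) (hh : h ∈ Hgrp S) (ht : t h = 0) : h = 1 := by
  obtain ⟨p, q, rfl⟩ := rep_pq S h hh
  set P := wprod S p with hP
  set Q := wprod S q with hQ
  set g := θ (P * Q⁻¹) with hg
  -- vp = g · vq
  have hrel : t P = act g (t Q) := by
    have h1 : (P * Q⁻¹) * Q = P := by group
    have h2 : t ((P * Q⁻¹) * Q) = t (P * Q⁻¹) + act g (t Q) := by rw [t_mul, hg]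
    rw [h1, ht] at h2
    rw [h2, zero_add]
  set c : X → ℤ := fun _ => ∑ z, t Q z with hc
  have hQnn : ∀ z, 0 ≤ t Q z := fun z => t_wprod_nonneg S q z
  have hcnn : ∀ z, 0 ≤ c z - t Q z := by
    intro z
    simp only [hc]
    have : t Q z ≤ ∑ w, t Q w :=
      Finset.single_le_sum (fun i _ => hQnn i) (Finset.mem_univ z)
    omega
  have hactc : ∀ gg : Equiv.Perm X, act gg c = c := fun gg => rfl
  -- vectors to append
  have hannn : ∀ z, 0 ≤ act (θ Q)⁻¹ (c - t Q) z := fun z => act_nonneg _ hcnn z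
  have hbnnnAux : ∀ z, 0 ≤ (c - t P) z := by
    intro z
    rw [hrel]
    show 0 ≤ c z - t Q ((g)⁻¹ z)
    exact hcnn _
  have hbnn : ∀ z, 0 ≤ act (θ P)⁻¹ (c - t P) z := fun z => act_nonneg _ hbnnnAux z
  obtain ⟨al, hal⟩ := surjP S _ _ hannn rfl
  obtain ⟨bl, hbl⟩ := surjP S _ _ hbnn rfl
  -- both concatenations have translation vector c
  have hDa : t (wprod S (q ++ al)) = c := by
    rw [wprod_append, t_mul, hal, ← hQ, ← act_mul, mul_inv_cancel, act_one]
    funext z; simp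
  have hDb : t (wprod S (p ++ bl)) = c := by
    rw [wprod_append, t_mul, hbl, ← hP, ← act_mul, mul_inv_cancel, act_one]
    funext z; simp
  -- equal lengths
  have hlen : (q ++ al).length = (p ++ bl).length := by
    have h1 : ((q ++ al).length : ℤ) = ∑ z, c z := by rw [← sum_t_wprod S, hDa]
    have h2 : ((p ++ bl).length : ℤ) = ∑ z, c z := by rw [← sum_t_wprod S, hDb]
    exact_mod_cast h1.trans h2.symm
  have hD : wprod S (q ++ al) = wprod S (p ++ bl) :=
    claimB S ((q ++ al).length) (q ++ al) (p ++ bl) rfl hlen.symm (by rw [hDa, hDb])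
  rw [wprod_append, wprod_append, ← hQ, ← hP] at hD
  -- hD : Q * wprod S al = P * wprod S bl
  have hP2 : P = (Q * wprod S al) * (wprod S bl)⁻¹ := by rw [hD]; group
  have hPD : P * Q⁻¹ = (Q * wprod S al) * ((wprod S bl)⁻¹ * wprod S al)
      * (Q * wprod S al)⁻¹ := by
    rw [hP2]; group
  have htD : t (Q * wprod S al) = c := by
    rw [hQ, ← wprod_append]
    exact hDa
  have hθD : t (P * Q⁻¹ * (Q * wprod S al)) = c := by
    rw [t_mul, ht, zero_add, htD, hactc]
  have htu : t ((wprod S bl)⁻¹ * wprod S al) = 0 := by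
    have h1 : (wprod S bl)⁻¹ * wprod S al
        = (Q * wprod S al)⁻¹ * (P * Q⁻¹ * (Q * wprod S al)) := by
      rw [hPD]; group
    have h2 : t ((Q * wprod S al)⁻¹ * (P * Q⁻¹ * (Q * wprod S al)))
        = t (Q * wprod S al)⁻¹ + act (θ (Q * wprod S al))⁻¹ (t (P * Q⁻¹ * (Q * wprod S al))) := by
      rw [t_mul, map_inv]
    rw [h1, h2, hθD, t_inv, htD, hactc]
    simp
  -- conclude al-word equals bl-word
  have htab : t (wprod S al) = t (wprod S bl) := by
    have h1 : wprod S al = wprod S bl * ((wprod S bl)⁻¹ * wprod S al) := by group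
    rw [h1, t_mul, htu]
    simp
  have hlab : al.length = bl.length := by
    have h1 : (al.length : ℤ) = ∑ z, t (wprod S al) z := (sum_t_wprod S al).symm
    rw [htab, sum_t_wprod S bl] at h1
    exact_mod_cast h1
  have hab : wprod S al = wprod S bl := claimB S (al.length) al bl rfl hlab.symm htab
  rw [hPD, hab]
  group

/-- `t` is injective on the structure group -/
theorem t_inj (h₁ h₂ : Wgrp X) (hh₁ : h₁ ∈ Hgrp S) (hh₂ : h₂ ∈ Hgrp S)
    (ht : t h₁ = t h₂) : h₁ = h₂ := by
  have hc : h₁⁻¹ * h₂ ∈ Hgrp S := mul_mem (inv_mem hh₁) hh₂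
  have ht0 : t (h₁⁻¹ * h₂) = 0 := by
    rw [t_mul, t_inv, map_inv]
    rw [← ht]
    simp [← act_mul]
  have h0 := t_eq_zero_imp_one S _ hc ht0
  have h2 : h₁ * (h₁⁻¹ * h₂) = h₁ * 1 := by rw [h0]
  rw [mul_one] at h2
  rw [← h2]
  group

end InjSurj
section Surj2
open Wgrp
open scoped Classical

variable {X : Type*} [Fintype X] (S : YBSolution X)

lemma surj_subgroup (B : Subgroup (Wgrp X)) (c : ℤ)
    (incr : ∀ h ∈ B, ∀ y : X, ∃ h' ∈ B, t h' = t h + c • ev y)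
    (decr : ∀ h ∈ B, ∀ y : X, ∃ h' ∈ B, t h' = t h - c • ev y) :
    ∀ v : X → ℤ, ∃ h ∈ B, t h = c • v := by
  have key : ∀ (n : ℕ) (v : X → ℤ), (∑ z, (v z).natAbs) = n → ∃ h ∈ B, t h = c • v := by
    intro n
    induction n using Nat.strong_induction_on with
    | _ n ih =>
      intro v hn
      by_cases h0 : v = 0
      · exact ⟨1, one_mem _, by simp [h0]⟩
      · have hex : ∃ y, v y ≠ 0 := by
          by_contra hcon
          push_neg at hcon
          exact h0 (funext hcon)
        obtain ⟨y, hy⟩ := hex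
        rcases lt_or_gt_of_ne hy with hneg | hpos
        · -- v y < 0 : use decr on v + ev y
          set v' : X → ℤ := v + ev y with hv'
          have hmeas : (∑ z, (v' z).natAbs) < n := by
            rw [← hn]
            rw [← Finset.add_sum_erase Finset.univ _ (Finset.mem_univ y),
              ← Finset.add_sum_erase Finset.univ (fun z => (v z).natAbs) (Finset.mem_univ y)]
            have h1 : ∀ z ∈ Finset.univ.erase y, (v' z).natAbs = (v z).natAbs := by
              intro z hz
              have : ev y z = 0 := by simp [ev, Finset.ne_of_mem_erase hz]
              simp [hv', this]
            rw [Finset.sum_congr rfl h1]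
            have : (v' y).natAbs < (v y).natAbs := by
              simp only [hv', Pi.add_apply, ev_self]
              omega
            omega
          obtain ⟨h, hB, hth⟩ := ih _ hmeas v' rfl
          obtain ⟨h', hB', hth'⟩ := decr h hB y
          refine ⟨h', hB', ?_⟩
          rw [hth', hth, hv']
          funext z
          simp only [Pi.add_apply, Pi.sub_apply, Pi.smul_apply, smul_eq_mul]
          ring
        · -- v y > 0 : use incr on v - ev y
          set v' : X → ℤ := v - ev y with hv'
          have hmeas : (∑ z, (v' z).natAbs) < n := by
            rw [← hn]
            rw [← Finset.add_sum_erase Finset.univ _ (Finset.mem_univ y),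
              ← Finset.add_sum_erase Finset.univ (fun z => (v z).natAbs) (Finset.mem_univ y)]
            have h1 : ∀ z ∈ Finset.univ.erase y, (v' z).natAbs = (v z).natAbs := by
              intro z hz
              have : ev y z = 0 := by simp [ev, Finset.ne_of_mem_erase hz]
              simp [hv', this]
            rw [Finset.sum_congr rfl h1]
            have : (v' y).natAbs < (v y).natAbs := by
              simp only [hv', Pi.sub_apply, ev_self]
              omega
            omega
          obtain ⟨h, hB, hth⟩ := ih _ hmeas v' rfl
          obtain ⟨h', hB', hth'⟩ := incr h hB y
          refine ⟨h', hB', ?_⟩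
          rw [hth', hth, hv']
          funext z
          simp only [Pi.sub_apply, Pi.add_apply, Pi.smul_apply, smul_eq_mul]
          ring
  intro v
  exact key _ v rfl

lemma t_wgen_inv (z : X) : t (wgen S z)⁻¹ = - ev (S.U z) := by
  rw [t_inv, t_wgen, θ_wgen]
  congr 1
  rw [act_ev]
  congr 1

lemma sigmaCabPerm_inv_self (kk : ℕ) (z : X) :
    (S.sigmaCabPerm kk z)⁻¹ z = S.U^[kk] z := by
  have h : (S.sigmaCabPerm kk z) (S.U^[kk] z) = z := by
    rw [S.sigmaCabPerm_coe]
    exact S.sigmaCab_U_iter kk z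
  rw [Equiv.Perm.inv_def, Equiv.symm_apply_eq]
  exact h.symm

lemma t_wcab_inv (kk : ℕ) (z : X) :
    t (wcab S kk z)⁻¹ = - ((kk : ℤ) • ev (S.U^[kk] z)) := by
  rw [t_inv, t_wcab, θ_wcab, act_smul, act_ev, sigmaCabPerm_inv_self S kk z]

lemma surj_Hgrp : ∀ v : X → ℤ, ∃ h ∈ Hgrp S, t h = v := by
  have h := surj_subgroup (Hgrp S) 1 ?_ ?_
  · intro v
    obtain ⟨h', hm, ht⟩ := h v
    exact ⟨h', hm, by rw [ht]; simp⟩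
  · intro h hB y
    refine ⟨h * wgen S ((θ h)⁻¹ y), mul_mem hB (Subgroup.subset_closure ⟨_, rfl⟩), ?_⟩
    rw [t_mul, t_wgen, act_ev]
    simp
  · intro h hB y
    refine ⟨h * (wgen S (S.T ((θ h)⁻¹ y)))⁻¹,
      mul_mem hB (inv_mem (Subgroup.subset_closure ⟨_, rfl⟩)), ?_⟩
    rw [t_mul, t_wgen_inv, act_neg, act_ev, S.U_T]
    simp [sub_eq_add_neg]

lemma surj_Hcab (k : ℕ) : ∀ v : X → ℤ, ∃ h ∈ Hcab S k, t h = (k : ℤ) • v := by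
  refine surj_subgroup (Hcab S k) (k : ℤ) ?_ ?_
  · intro h hB y
    refine ⟨h * wcab S k ((θ h)⁻¹ y), mul_mem hB (Subgroup.subset_closure ⟨_, rfl⟩), ?_⟩
    rw [t_mul, t_wcab, act_smul, act_ev]
    simp
  · intro h hB y
    refine ⟨h * (wcab S k (S.T^[k] ((θ h)⁻¹ y)))⁻¹,
      mul_mem hB (inv_mem (Subgroup.subset_closure ⟨_, rfl⟩)), ?_⟩
    rw [t_mul, t_wcab_inv, act_neg, act_smul, act_ev, S.U_iter_T_iter]
    simp [sub_eq_add_neg]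

end Surj2
section KeyPart
open Wgrp
open scoped Classical

variable {X : Type*} [Fintype X] (S : YBSolution X)

lemma W_ext (a b : Wgrp X) (h1 : t a = t b) (h2 : θ a = θ b) : a = b := by
  apply SemidirectProduct.ext
  · have := congrArg Multiplicative.ofAdd h1
    simpa [t] using this
  · exact h2

/-- the subgroup of pure translations in the structure group -/
noncomputable def L0 : AddSubgroup (X → ℤ) :=
  Subgroup.toAddSubgroup' ((Hgrp S).comap (SemidirectProduct.inl))

lemma mem_L0 (v : X → ℤ) :
    v ∈ L0 S ↔ (SemidirectProduct.inl (Multiplicative.ofAdd v) : Wgrp X) ∈ Hgrp S :=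
  Iff.rfl

@[simp] lemma t_inl (v : X → ℤ) :
    t (SemidirectProduct.inl (Multiplicative.ofAdd v) : Wgrp X) = v := rfl

@[simp] lemma θ_inl (v : X → ℤ) :
    θ (SemidirectProduct.inl (Multiplicative.ofAdd v) : Wgrp X) = 1 :=
  SemidirectProduct.rightHom_inl _

lemma eq_inl_of_θ_one (h : Wgrp X) (hθ : θ h = 1) :
    h = SemidirectProduct.inl (Multiplicative.ofAdd (t h)) :=
  W_ext _ _ rfl (by simp [hθ])

lemma t_mem_L0 (h : Wgrp X) (hm : h ∈ Hgrp S) (hθ : θ h = 1) : t h ∈ L0 S := by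
  rw [mem_L0, ← eq_inl_of_θ_one h hθ]
  exact hm

lemma L0_act (h : Wgrp X) (hm : h ∈ Hgrp S) (v : X → ℤ) (hv : v ∈ L0 S) :
    act (θ h) v ∈ L0 S := by
  rw [mem_L0] at hv ⊢
  have heq : (SemidirectProduct.inl (Multiplicative.ofAdd (act (θ h) v)) : Wgrp X)
      = h * SemidirectProduct.inl (Multiplicative.ofAdd v) * h⁻¹ := by
    apply W_ext
    · rw [t_inl, t_mul, t_mul, t_inl, t_inv, map_mul]
      simp only [θ_inl, mul_one]
      rw [act_neg, ← act_mul, mul_inv_cancel, act_one]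
      abel
    · simp
  rw [heq]
  exact mul_mem (mul_mem hm hv) (inv_mem hm)

variable (k : ℕ)

/-- coordinatewise reduction mod `k` -/
noncomputable def redk : (X → ℤ) →+ (X → ZMod k) where
  toFun v := fun z => ((v z : ℤ) : ZMod k)
  map_zero' := by funext z; simp
  map_add' v w := by funext z; simp

lemma redk_act (g : Equiv.Perm X) (v : X → ℤ) (z : X) :
    redk k (act g v) z = redk k v (g.symm z) := rfl

lemma redk_smul (c : ℤ) (v : X → ℤ) : redk k (c • v) = (c : ZMod k) • (redk k v) := by
  funext z
  simp [redk]

/-- `t` of the cabled subgroup vanishes mod `k` -/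
lemma redk_t_Hcab (h : Wgrp X) (hm : h ∈ Hcab S k) : redk k (t h) = 0 := by
  induction hm using Subgroup.closure_induction with
  | mem g hg =>
    obtain ⟨x, rfl⟩ := hg
    rw [t_wcab, redk_smul]
    simp
  | one => simp
  | mul a b _ _ iha ihb =>
    rw [t_mul, map_add, iha]
    funext z
    rw [Pi.add_apply, redk_act, Pi.zero_apply, zero_add]
    have := congrFun ihb ((θ a).symm z)
    simpa using this
  | inv a _ iha =>
    rw [t_inv, map_neg]
    funext z
    rw [Pi.neg_apply, redk_act]
    have := congrFun iha ((θ a)⁻¹.symm z)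
    simp only [Pi.zero_apply] at this ⊢
    rw [this]
    ring

/-- image of the translation subgroup mod `k` -/
noncomputable def Lk : AddSubgroup (X → ZMod k) := (L0 S).map (redk k)

/-- THE key lemma: cosets of the cabled permutation group inside the permutation group
are classified by the translation vector mod `k` and mod `Lk`. -/
lemma key_lemma (hk : 0 < k) (h₁ h₂ : Wgrp X) (hm₁ : h₁ ∈ Hgrp S) (hm₂ : h₂ ∈ Hgrp S) :
    (θ h₁)⁻¹ * θ h₂ ∈ S.Gcab k ↔
      redk k (t h₂) - redk k (t h₁) ∈ Lk S k := by
  haveI : NeZero k := ⟨hk.ne'⟩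
  constructor
  · intro hmem
    rw [← θ_map_Hcab S k] at hmem
    obtain ⟨a, ha, hθa⟩ := hmem
    set l := a⁻¹ * (h₁⁻¹ * h₂) with hl
    have hlH : l ∈ Hgrp S :=
      mul_mem (inv_mem (Hcab_le S k ha)) (mul_mem (inv_mem hm₁) hm₂)
    have hθl : θ l = 1 := by
      rw [hl, map_mul, map_mul, map_inv, map_inv, hθa]
      group
    have hdecomp : h₂ = h₁ * a * l := by rw [hl]; group
    have ht2 : t h₂ = t h₁ + act (θ h₁) (t a) + act (θ h₁ * θ a) (t l) := by
      rw [hdecomp, t_mul, t_mul, map_mul]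
    have hred : redk k (t h₂) - redk k (t h₁) = redk k (act (θ h₁ * θ a) (t l)) := by
      rw [ht2, map_add, map_add]
      have hza : redk k (act (θ h₁) (t a)) = 0 := by
        funext z
        rw [redk_act]
        have := congrFun (redk_t_Hcab S k a ha) ((θ h₁).symm z)
        simpa using this
      rw [hza]
      abel
    rw [hred]
    have hL : act (θ (h₁ * a)) (t l) ∈ L0 S :=
      L0_act S (h₁ * a) (mul_mem hm₁ (Hcab_le S k ha)) (t l) (t_mem_L0 S l hlH hθl)
    rw [map_mul] at hL
    exact ⟨_, hL, rfl⟩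
  · intro hmem
    obtain ⟨lt, hlt, hredl⟩ := hmem
    have hdvd : ∀ z, (k : ℤ) ∣ (t h₂ - t h₁ - lt) z := by
      intro z
      have h0 : redk k (t h₂ - t h₁ - lt) z = 0 := by
        rw [map_sub, map_sub, hredl]
        simp
      have : ((( t h₂ - t h₁ - lt) z : ℤ) : ZMod k) = 0 := h0
      rwa [ZMod.intCast_zmod_eq_zero_iff_dvd] at this
    set u : X → ℤ := fun z => (t h₂ - t h₁ - lt) z / k with hudef
    have hu : ∀ z, (k : ℤ) * u z = (t h₂ - t h₁ - lt) z := fun z =>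
      Int.mul_ediv_cancel' (hdvd z)
    have hl'mem : act (θ h₁)⁻¹ lt ∈ L0 S := by
      have := L0_act S h₁⁻¹ (inv_mem hm₁) lt hlt
      rwa [map_inv] at this
    set l' : Wgrp X := SemidirectProduct.inl (Multiplicative.ofAdd (act (θ h₁)⁻¹ lt))
      with hl'def
    have hl'H : l' ∈ Hgrp S := (mem_L0 S _).mp hl'mem
    obtain ⟨a, haH, hta⟩ := surj_Hcab S k (act (θ (h₁ * l'))⁻¹ u)
    have h₃H : h₁ * l' * a ∈ Hgrp S := mul_mem (mul_mem hm₁ hl'H) (Hcab_le S k haH)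
    have ht₃ : t (h₁ * l' * a) = t h₂ := by
      rw [t_mul, t_mul, hta]
      have htl' : t l' = act (θ h₁)⁻¹ lt := rfl
      rw [htl', ← act_mul, mul_inv_cancel, act_one, act_smul, ← act_mul, mul_inv_cancel,
        act_one]
      funext z
      have := hu z
      simp only [Pi.add_apply, Pi.smul_apply, smul_eq_mul, Pi.sub_apply] at this ⊢
      omega
    have heq := t_inj S (h₁ * l' * a) h₂ h₃H hm₂ ht₃
    have hθ : θ h₂ = θ h₁ * θ a := by
      rw [← heq, map_mul, map_mul]
      have : θ l' = 1 := SemidirectProduct.rightHom_inl _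
      rw [this, mul_one]
    rw [← θ_map_Hcab S k]
    exact ⟨a, haH, by rw [hθ]; group⟩

end KeyPart
section Final
open Wgrp
open scoped Classical

variable {X : Type*} [Fintype X] (S : YBSolution X)

lemma Gcab_le_G (k : ℕ) : S.Gcab k ≤ S.G := by
  rw [← θ_map_Hcab S k, ← θ_map_Hgrp S]
  exact Subgroup.map_mono (Hcab_le S k)

lemma Gorbit_eq (x : X) : S.Gorbit x = MulAction.orbit ↥S.G x := by
  ext y
  constructor
  · rintro ⟨g, hg, rfl⟩
    exact ⟨⟨g, hg⟩, rfl⟩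
  · rintro ⟨⟨g, hg⟩, rfl⟩
    exact ⟨g, hg, rfl⟩

lemma GcabOrbit_eq (k : ℕ) (x : X) : S.GcabOrbit k x = MulAction.orbit ↥(S.Gcab k) x := by
  ext y
  constructor
  · rintro ⟨g, hg, rfl⟩
    exact ⟨⟨g, hg⟩, rfl⟩
  · rintro ⟨⟨g, hg⟩, rfl⟩
    exact ⟨g, hg, rfl⟩

/-- the index of the cabled group: `Nat.card G = Nat.card (quotient) * Nat.card Gcab`,
with the quotient in bijection with `(X → ZMod k) ⧸ Lk`. -/
lemma card_G_eq (k : ℕ) (hk : 0 < k) :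
    ∃ cQ : ℕ, cQ ∣ k ^ (Fintype.card X) ∧
      Nat.card ↥S.G = cQ * Nat.card ↥(S.Gcab k) := by
  haveI : NeZero k := ⟨hk.ne'⟩
  set K' : Subgroup ↥S.G := (S.Gcab k).subgroupOf S.G with hK'
  -- a section of θ over G
  have hsec : ∀ g : ↥S.G, ∃ h : Wgrp X, h ∈ Hgrp S ∧ θ h = ↑g := by
    intro g
    have : (g : Equiv.Perm X) ∈ (Hgrp S).map θ := by rw [θ_map_Hgrp]; exact g.2
    obtain ⟨h, hh, hth⟩ := this
    exact ⟨h, hh, hth⟩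
  choose sec hsecH hsecθ using hsec
  set Vq := (X → ZMod k) ⧸ (Lk S k) with hVq
  set f₀ : ↥S.G → Vq := fun g => QuotientAddGroup.mk (redk k (t (sec g))) with hf₀
  -- the fundamental equivalence
  have hiff : ∀ g₁ g₂ : ↥S.G, f₀ g₁ = f₀ g₂ ↔ (↑g₁)⁻¹ * (↑g₂ : Equiv.Perm X) ∈ S.Gcab k := by
    intro g₁ g₂
    have hkey := key_lemma S k hk (sec g₁) (sec g₂) (hsecH g₁) (hsecH g₂)
    rw [hsecθ, hsecθ] at hkey
    constructor
    · intro h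
      apply hkey.2
      have h1 : (QuotientAddGroup.mk (redk k (t (sec g₁))) : Vq)
          = QuotientAddGroup.mk (redk k (t (sec g₂))) := h
      have h2 := neg_mem ((QuotientAddGroup.eq_iff_sub_mem).1 h1)
      rwa [neg_sub] at h2
    · intro h
      have h2 := neg_mem (hkey.1 h)
      rw [neg_sub] at h2
      exact (QuotientAddGroup.eq_iff_sub_mem).2 h2
  -- f₀ is surjective
  have hsurj : Function.Surjective f₀ := by
    intro q
    induction q using QuotientAddGroup.induction_on with
    | H w =>
      set v : X → ℤ := fun z => ((w z).val : ℤ) with hv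
      have hred : redk k v = w := by
        funext z
        show (((w z).val : ℤ) : ZMod k) = w z
        rw [Int.cast_natCast, ZMod.natCast_val, ZMod.cast_id]
      obtain ⟨h, hhH, hth⟩ := surj_Hgrp S v
      have hgmem : θ h ∈ S.G := by
        rw [← θ_map_Hgrp]
        exact ⟨h, hhH, rfl⟩
      refine ⟨⟨θ h, hgmem⟩, ?_⟩
      have h1 : (↑(⟨θ h, hgmem⟩ : ↥S.G))⁻¹ * (θ h) ∈ S.Gcab k := by
        simp only [inv_mul_cancel]
        exact one_mem _
      have hkey := key_lemma S k hk (sec ⟨θ h, hgmem⟩) h (hsecH _) hhH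
      rw [hsecθ] at hkey
      have h2 := hkey.1 h1
      have h3 : (QuotientAddGroup.mk (redk k (t (sec ⟨θ h, hgmem⟩))) : Vq)
          = QuotientAddGroup.mk (redk k (t h)) := by
        refine (QuotientAddGroup.eq_iff_sub_mem).2 ?_
        have h4 := neg_mem h2
        rwa [neg_sub] at h4
      rw [hf₀]
      dsimp only
      rw [h3, hth, hred]
  -- descend to the quotient
  set F : (↥S.G ⧸ K') → Vq := Quotient.lift f₀ (by
    intro a b hab
    have hab2 : a⁻¹ * b ∈ K' := QuotientGroup.leftRel_apply.mp hab
    rw [hK', Subgroup.mem_subgroupOf] at hab2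
    exact (hiff a b).2 hab2) with hF
  have hFbij : Function.Bijective F := by
    constructor
    · intro q₁ q₂ hab
      obtain ⟨a⟩ := q₁
      obtain ⟨b⟩ := q₂
      have h2 := (hiff a b).1 hab
      apply Quotient.sound
      refine QuotientGroup.leftRel_apply.mpr ?_
      rw [hK', Subgroup.mem_subgroupOf]
      simpa using h2
    · intro q
      obtain ⟨g, hg⟩ := hsurj q
      exact ⟨Quotient.mk _ g, hg⟩
  refine ⟨Nat.card Vq, ?_, ?_⟩
  · have h1 : Nat.card Vq = (Lk S k).index := rfl
    have h2 : Nat.card (X → ZMod k) = k ^ (Fintype.card X) := by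
      simp [Nat.card_pi, Nat.card_zmod]
    rw [h1, ← h2]
    exact AddSubgroup.index_dvd_card _
  · have h1 : Nat.card ↥S.G = Nat.card (↥S.G ⧸ K') * Nat.card ↥K' :=
      Subgroup.card_eq_card_quotient_mul_card_subgroup _
    have h2 : Nat.card (↥S.G ⧸ K') = Nat.card Vq :=
      Nat.card_congr (Equiv.ofBijective F hFbij)
    have h3 : Nat.card ↥K' = Nat.card ↥(S.Gcab k) :=
      Nat.card_congr (Subgroup.subgroupOfEquivOfLe (Gcab_le_G S k)).toEquiv
    rw [h1, h2, h3]

end Final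
section MainProof
open Wgrp
open scoped Classical

variable {X : Type*}

lemma orbit_stab_G [Fintype X] (S : YBSolution X) (x : X) :
    Nat.card (MulAction.orbit ↥S.G x) * Nat.card (MulAction.stabilizer ↥S.G x)
      = Nat.card ↥S.G := by
  rw [Nat.card_congr (MulAction.orbitEquivQuotientStabilizer ↥S.G x)]
  exact (Subgroup.card_eq_card_quotient_mul_card_subgroup _).symm

lemma orbit_stab_Gcab [Fintype X] (S : YBSolution X) (k : ℕ) (x : X) :
    Nat.card (MulAction.orbit ↥(S.Gcab k) x) * Nat.card (MulAction.stabilizer ↥(S.Gcab k) x)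
      = Nat.card ↥(S.Gcab k) := by
  rw [Nat.card_congr (MulAction.orbitEquivQuotientStabilizer ↥(S.Gcab k) x)]
  exact (Subgroup.card_eq_card_quotient_mul_card_subgroup _).symm

lemma stab_card_dvd [Fintype X] (S : YBSolution X) (k : ℕ) (x : X) :
    Nat.card (MulAction.stabilizer ↥(S.Gcab k) x) ∣
      Nat.card (MulAction.stabilizer ↥S.G x) := by
  have hle := Gcab_le_G S k
  have hstab : ∀ g : ↥(MulAction.stabilizer ↥(S.Gcab k) x),
      Subgroup.inclusion hle (g : ↥(S.Gcab k)) ∈ MulAction.stabilizer ↥S.G x := by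
    rintro ⟨g, hg⟩
    have h2 : g • x = x := hg
    exact h2
  let j : ↥(MulAction.stabilizer ↥(S.Gcab k) x) →* ↥(MulAction.stabilizer ↥S.G x) :=
    { toFun := fun g => ⟨Subgroup.inclusion hle (g : ↥(S.Gcab k)), hstab g⟩,
      map_one' := rfl,
      map_mul' := fun a b => rfl }
  have hinj : Function.Injective j := by
    intro a b hab
    have h1 : ((((j a : ↥(MulAction.stabilizer ↥S.G x)) : ↥S.G)) : Equiv.Perm X)
        = (((j b : ↥(MulAction.stabilizer ↥S.G x)) : ↥S.G) : Equiv.Perm X) := by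
      rw [hab]
    have h2 : ((a : ↥(S.Gcab k)) : Equiv.Perm X) = ((b : ↥(S.Gcab k)) : Equiv.Perm X) := h1
    ext
    exact congrFun (congrArg _ h2) _
  exact Subgroup.card_dvd_of_injective j hinj

end MainProof
/-- if `x` lies in a `𝒢(X,r)`-orbit of size `m` and in a
`𝒢(X,r^{(k)})`-orbit of size `m'`, then `m'` is a multiple of the maximal divisor
of `m` coprime to `k`; equivalently, every divisor `d` of `m` with `gcd(d,k) = 1`
divides `m'`. -/
theorem cabled_orbit_size [Fintype X] (S : YBSolution X) (k : ℕ) (hk : 0 < k) (x : X)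
    (m m' : ℕ) (hm : (S.Gorbit x).ncard = m) (hm' : (S.GcabOrbit k x).ncard = m')
    (d : ℕ) (hdm : d ∣ m) (hdk : Nat.Coprime d k) : d ∣ m' := by
  classical
  -- orbit sizes as Nat.card
  have hm1 : Nat.card (MulAction.orbit ↥S.G x) = m := by
    rw [← hm, Gorbit_eq S x, Nat.card_coe_set_eq]
  have hm2 : Nat.card (MulAction.orbit ↥(S.Gcab k) x) = m' := by
    rw [← hm', GcabOrbit_eq S k x, Nat.card_coe_set_eq]
  set sG := Nat.card (MulAction.stabilizer ↥S.G x) with hsG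
  set sK := Nat.card (MulAction.stabilizer ↥(S.Gcab k) x) with hsK
  have e1 : m * sG = Nat.card ↥S.G := by rw [← hm1]; exact orbit_stab_G S x
  have e2 : m' * sK = Nat.card ↥(S.Gcab k) := by rw [← hm2]; exact orbit_stab_Gcab S k x
  obtain ⟨cQ, hcQdvd, e3⟩ := card_G_eq S k hk
  obtain ⟨s, hs⟩ := stab_card_dvd S k x
  have hsKpos : 0 < sK := by
    rw [hsK]
    exact Nat.card_pos
  have hmain : m * s = cQ * m' := by
    have h1 : m * s * sK = cQ * m' * sK := by
      calc m * s * sK = m * (sK * s) := by ring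
        _ = m * sG := by rw [← hs]
        _ = cQ * Nat.card ↥(S.Gcab k) := by rw [e1, e3]
        _ = cQ * (m' * sK) := by rw [e2]
        _ = cQ * m' * sK := by ring
    exact Nat.eq_of_mul_eq_mul_right hsKpos h1
  have hdc : Nat.Coprime d cQ :=
    Nat.Coprime.coprime_dvd_right hcQdvd (Nat.Coprime.pow_right _ hdk)
  have hdvd : d ∣ cQ * m' := hmain ▸ (Dvd.dvd.mul_right hdm s)
  rw [mul_comm] at hdvd
  exact Nat.Coprime.dvd_of_dvd_mul_right hdc hdvd
end

section
/- Let (X,r) be a solution. For all x, y ∈ X and every positive integer l, one has π_l(y) = Id if and only if π_l(σ_x(y)) = Id. Consequently, the least positive integer l with π_l(y) = Id is the same for all elements y lying in the same 𝒢(X,r)-orbit. -/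
open Function

variable {X : Type*}

namespace YBSolution

variable [Fintype X] (S : YBSolution X)

lemma braid_fst (x y z : X) :
    S.σ (S.σ x y) (S.σ (S.τ y x) z) = S.σ x (S.σ y z) := by
  have h := congrFun S.braid (x, y, z)
  have := congrArg Prod.fst h
  simpa [lmap, rmap, ybR] using this

lemma tau_apply (x y : X) : S.τ y x = (S.σ (S.σ x y)).symm x :=
  (Equiv.eq_symm_apply _).mpr (S.inv1 x y)

lemma U_injective : Function.Injective S.U :=
  Function.LeftInverse.injective S.T_U

lemma U_sigma (x y : X) : S.U (S.σ x y) = S.σ (S.τ y x) (S.U y) := by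
  have : S.σ (S.σ x y) (S.σ (S.τ y x) (S.U y)) = S.σ x y := by
    rw [S.braid_fst, S.sigma_U]
  have := congrArg (S.σ (S.σ x y)).symm this
  simpa [U] using this.symm

/-- Key commuting identity:
`σ_x ∘ π_j(y) = π_j(σ_x y) ∘ σ_{τ-chain}`. -/
lemma sigma_comp_sigmaCab (j : ℕ) : ∀ x y : X,
    ⇑(S.σ x) ∘ S.sigmaCab j y
      = S.sigmaCab j (S.σ x y) ∘ ⇑(S.σ (S.tauChain j y x)) := by
  induction j with
  | zero => intro x y; rfl
  | succ j ih =>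
      intro x y
      have hR : ⇑(S.σ x) ∘ ⇑(S.σ y)
          = ⇑(S.σ (S.σ x y)) ∘ ⇑(S.σ (S.τ y x)) := by
        funext z
        simpa using (S.braid_fst x y z).symm
      calc ⇑(S.σ x) ∘ S.sigmaCab (j+1) y
          = (⇑(S.σ x) ∘ ⇑(S.σ y)) ∘ S.sigmaCab j (S.U y) := rfl
        _ = ⇑(S.σ (S.σ x y)) ∘ (⇑(S.σ (S.τ y x)) ∘ S.sigmaCab j (S.U y)) := by
            rw [hR]; rfl
        _ = ⇑(S.σ (S.σ x y)) ∘ (S.sigmaCab j (S.σ (S.τ y x) (S.U y))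
              ∘ ⇑(S.σ (S.tauChain j (S.U y) (S.τ y x)))) := by
            rw [ih]
        _ = S.sigmaCab (j+1) (S.σ x y) ∘ ⇑(S.σ (S.tauChain (j+1) y x)) := by
            rw [← S.U_sigma]; rfl

/-- `π_j(σ_x y)` sends the `τ`-chain of `x` back to `x`. -/
lemma sigmaCab_tauChain (j : ℕ) : ∀ x y : X,
    S.sigmaCab j (S.σ x y) (S.tauChain j y x) = x := by
  induction j with
  | zero => intro x y; rfl
  | succ j ih =>
      intro x y
      have h1 : S.tauChain (j+1) y x = S.tauChain j (S.U y) (S.τ y x) := rfl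
      have h2 : S.sigmaCab (j+1) (S.σ x y)
          = ⇑(S.σ (S.σ x y)) ∘ S.sigmaCab j (S.U (S.σ x y)) := rfl
      rw [h1, h2]
      simp only [Function.comp_apply, S.U_sigma x y]
      rw [ih (S.τ y x) (S.U y), S.inv1]

/-- Forward direction: if `π_l(y) = id` then `π_l(σ_x y) = id`. -/
lemma sigmaCab_id_sigma {l : ℕ} {y : X} (hy : S.sigmaCab l y = id) (x : X) :
    S.sigmaCab l (S.σ x y) = id := by
  set c := S.tauChain l y x with hc
  have hI : ⇑(S.σ x) = S.sigmaCab l (S.σ x y) ∘ ⇑(S.σ c) := by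
    have := S.sigma_comp_sigmaCab l x y
    rwa [hy, Function.comp_id] at this
  have hB : S.sigmaCab l (S.σ x y) c = x := S.sigmaCab_tauChain l x y
  -- evaluate hI at U c to get σ_x (U c) = x
  have h3 : S.σ x (S.U c) = x := by
    have := congrFun hI (S.U c)
    simpa [S.sigma_U c, hB] using this
  have h4 : S.U c = S.U x := by
    have := S.sigma_U x
    exact (S.σ x).injective (by rw [h3, this])
  have hcx : c = x := S.U_injective h4
  funext t
  have := congrFun hI ((S.σ x).symm t)
  rw [hcx] at this
  simpa using this.symm

/-- The two-sided version, using finiteness. -/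
lemma sigmaCab_id_iff (x y : X) (l : ℕ) :
    S.sigmaCab l y = id ↔ S.sigmaCab l (S.σ x y) = id := by
  constructor
  · exact fun h => S.sigmaCab_id_sigma h x
  · intro h
    have hpow : ∀ m : ℕ, ∀ w : X, S.sigmaCab l w = id →
        S.sigmaCab l ((S.σ x ^ m) w) = id := by
      intro m
      induction m with
      | zero => intro w hw; simpa using hw
      | succ m ih =>
          intro w hw
          have : ((S.σ x) ^ (m+1)) w = ((S.σ x) ^ m) (S.σ x w) := by
            rw [pow_succ]; rfl
          rw [this]
          exact ih _ (S.sigmaCab_id_sigma hw x)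
    obtain ⟨n, hn, hord⟩ : ∃ n, 0 < n ∧ (S.σ x) ^ n = 1 :=
      ⟨orderOf (S.σ x), orderOf_pos _, pow_orderOf_eq_one _⟩
    have hy : ((S.σ x) ^ (n-1)) (S.σ x y) = y := by
      have : (S.σ x) ^ (n-1) * S.σ x = (S.σ x) ^ n := by
        rw [← pow_succ, Nat.sub_add_cancel hn]
      calc ((S.σ x) ^ (n-1)) (S.σ x y) = ((S.σ x) ^ (n-1) * S.σ x) y := rfl
        _ = ((S.σ x) ^ n) y := by rw [this]
        _ = y := by rw [hord]; rfl
    have := hpow (n-1) (S.σ x y) h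
    rwa [hy] at this

lemma sigmaCab_id_iff_of_mem_G {g : Equiv.Perm X} (hg : g ∈ S.G) (y : X) (l : ℕ) :
    (S.sigmaCab l y = id ↔ S.sigmaCab l (g y) = id) := by
  revert y
  induction hg using Subgroup.closure_induction with
  | mem g hgmem =>
      obtain ⟨x, rfl⟩ := hgmem
      intro y; exact S.sigmaCab_id_iff x y l
  | one => intro y; rfl
  | mul a b _ _ ha hb =>
      intro y
      exact (hb y).trans (ha (b y))
  | inv a _ ha =>
      intro y
      have := (ha (a⁻¹ y)).symm
      simpa using this

end YBSolution

/-- `π_l(y) = Id` iff `π_l(σ_x(y)) = Id`; consequently the least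
positive `l` with `π_l(y) = Id` is constant on `𝒢(X,r)`-orbits. -/
theorem pi_constant_on_orbits [Fintype X] (S : YBSolution X) :
    (∀ x y : X, ∀ l : ℕ, 0 < l →
      (S.sigmaCab l y = id ↔ S.sigmaCab l (S.σ x y) = id)) ∧
    ∀ y y' : X, (∃ g ∈ S.G, g y = y') → ∀ l : ℕ,
      (IsLeast {l' : ℕ | 0 < l' ∧ S.sigmaCab l' y = id} l ↔
       IsLeast {l' : ℕ | 0 < l' ∧ S.sigmaCab l' y' = id} l) := by
  have main : ∀ x y : X, ∀ l : ℕ,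
      (S.sigmaCab l y = id ↔ S.sigmaCab l (S.σ x y) = id) :=
    fun x y l => S.sigmaCab_id_iff x y l
  refine ⟨fun x y l _ => main x y l, ?_⟩
  rintro y y' ⟨g, hg, rfl⟩ l
  have hset : {l' : ℕ | 0 < l' ∧ S.sigmaCab l' y = id}
      = {l' : ℕ | 0 < l' ∧ S.sigmaCab l' (g y) = id} := by
    ext l'
    exact and_congr_right fun _ => S.sigmaCab_id_iff_of_mem_G hg y l'
  rw [hset]
end
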